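/- Let q = 2^r, let λ be the canonical additive character of F_q, let m be a positive integer, and let β ∈ F_q. Then Σ_{a ∈ F_q*} λ(−aβ)·K_m(λ;a) = q·K_{m−1}(λ; β^{−1}) + (−1)^{m+1} if β ≠ 0, and Σ_{a ∈ F_q*} λ(−aβ)·K_m(λ;a) = (−1)^{m+1} if β = 0, with the convention K₀(λ; β^{−1}) = λ(β^{−1}). -/

import Mathlib

open scoped Classical
open Finset Matrix

noncomputable section

/-- The trace map `tr : F_q → F_2`, viewed inside `F`:
`tr(x) = x + x² + ⋯ + x^(2^(r−1))`. -/
def trF (F : Type*) [Field F] (r : ℕ) (x : F) : F :=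
  ∑ i ∈ Finset.range r, x ^ (2 ^ i)

/-- The canonical additive character `λ(x) = (−1)^(tr x)`, valued in `ℚ`. -/
def lam (F : Type*) [Field F] (r : ℕ) (x : F) : ℚ :=
  if trF F r x = 0 then 1 else -1

/-- The Kloosterman sum `K(λ;a)`. -/
def Kl (F : Type*) [Field F] [Fintype F] (r : ℕ) (a : F) : ℚ :=
  ∑ α : Fˣ, lam F r ((α : F) + a * ((α : F))⁻¹)

/-- The 2-dimensional Kloosterman sum `K₂(λ;a)`. -/
def Kl2 (F : Type*) [Field F] [Fintype F] (r : ℕ) (a : F) : ℚ :=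
  ∑ α : Fˣ, ∑ β : Fˣ, lam F r ((α : F) + (β : F) + a * ((α : F))⁻¹ * ((β : F))⁻¹)

/-- The m-dimensional Kloosterman sum `K_m(λ;a)`; `K₀(λ;a) = λ(a)`. -/
def Klm (F : Type*) [Field F] [Fintype F] (r m : ℕ) (a : F) : ℚ :=
  ∑ α : Fin m → Fˣ, lam F r ((∑ i, ((α i : F))) + a * ∏ i, ((α i : F))⁻¹)

/-- Power moments of Kloosterman sums, `MK^h`. -/
def MK (F : Type*) [Field F] [Fintype F] (r h : ℕ) : ℚ :=
  ∑ a : Fˣ, (Kl F r (a : F)) ^ h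

/-- Power moments of 2-dimensional Kloosterman sums, `MK₂^h`. -/
def MK2 (F : Type*) [Field F] [Fintype F] (r h : ℕ) : ℚ :=
  ∑ a : Fˣ, (Kl2 F r (a : F)) ^ h

/-- Stirling numbers of the second kind. -/
def stirl (h t : ℕ) : ℚ :=
  (1 / (t.factorial : ℚ)) *
    ∑ j ∈ Finset.range (t + 1), (-1 : ℚ) ^ (t - j) * (t.choose j : ℚ) * (j : ℚ) ^ h

/-- Binomial coefficient `binom(b,a)` with the convention that it is `0`
when `a < 0` or `a > b`. -/
def binomQ (b a : ℤ) : ℚ :=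
  if 0 ≤ a ∧ a ≤ b then (b.toNat.choose a.toNat : ℚ) else 0

/-- The q-binomial coefficient `[n,r]_q`. -/
def qbinom (q n r : ℕ) : ℚ :=
  ∏ j ∈ Finset.range r, ((q : ℚ) ^ (n - j) - 1) / ((q : ℚ) ^ (r - j) - 1)

/-- `A⁻(n,q)`. -/
def Aneg (q n : ℕ) : ℚ :=
  (q : ℚ) ^ ((5 * n ^ 2 - 1) / 4) * qbinom q n 1 *
    ∏ j ∈ Finset.range ((n - 1) / 2), ((q : ℚ) ^ (2 * (j + 1) - 1) - 1)

/-- `B⁻(n,q)`. -/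
def Bneg (q n : ℕ) : ℚ :=
  (q : ℚ) ^ ((n - 1) ^ 2 / 4) * ((q : ℚ) ^ n - 1) *
    ∏ j ∈ Finset.range ((n - 1) / 2), ((q : ℚ) ^ (2 * (j + 1)) - 1)

/-- `A⁺(n,q)`. -/
def Apos (q n : ℕ) : ℚ :=
  (q : ℚ) ^ ((5 * n ^ 2 - 2 * n) / 4) * qbinom q n 2 *
    ∏ j ∈ Finset.range ((n - 2) / 2), ((q : ℚ) ^ (2 * (j + 1) - 1) - 1)

/-- `B⁺(n,q)`. -/
def Bpos (q n : ℕ) : ℚ :=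
  (q : ℚ) ^ ((n - 2) ^ 2 / 4) * ((q : ℚ) ^ n - 1) * ((q : ℚ) ^ (n - 1) - 1) *
    ∏ j ∈ Finset.range ((n - 2) / 2), ((q : ℚ) ^ (2 * (j + 1)) - 1)

/-- The type of `2n × 2n` matrices over `F`. -/
abbrev Mat (F : Type*) (n : ℕ) := Matrix (Fin n ⊕ Fin n) (Fin n ⊕ Fin n) F

/-- The maximal parabolic subgroup `P(2n,q)` of `Sp(2n,q)`, as a set of matrices. -/
def Pmat (F : Type*) [Field F] (n : ℕ) : Set (Mat F n) :=
  {w | ∃ A B : Matrix (Fin n) (Fin n) F, IsUnit A ∧ Bᵀ = B ∧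
        w = Matrix.fromBlocks A 0 0 (A⁻¹)ᵀ * Matrix.fromBlocks 1 B 0 1}

/-- The element `σ_r ∈ Sp(2n,q)`. -/
def sigmaMat (F : Type*) [Field F] (n r : ℕ) : Mat F n :=
  Matrix.fromBlocks
    (Matrix.of fun i j : Fin n => if i = j ∧ r ≤ (i : ℕ) then 1 else 0)
    (Matrix.of fun i j : Fin n => if i = j ∧ (i : ℕ) < r then 1 else 0)
    (Matrix.of fun i j : Fin n => if i = j ∧ (i : ℕ) < r then 1 else 0)
    (Matrix.of fun i j : Fin n => if i = j ∧ r ≤ (i : ℕ) then 1 else 0)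

/-- The double coset `P σ_r P` in `Sp(2n,q)`. -/
def DCoset (F : Type*) [Field F] (n r : ℕ) : Set (Mat F n) :=
  {w | ∃ p ∈ Pmat F n, ∃ p' ∈ Pmat F n, w = p * sigmaMat F n r * p'}

/-- `DC⁻(n,q) = P σ_(n−1) P`. -/
def DCneg (F : Type*) [Field F] (n : ℕ) : Set (Mat F n) := DCoset F n (n - 1)

/-- `DC⁺(n,q) = P σ_(n−2) P`. -/
def DCpos (F : Type*) [Field F] (n : ℕ) : Set (Mat F n) := DCoset F n (n - 2)

/-- `N_S(β) = |{w ∈ S : Tr w = β}|`. -/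
def NDC (F : Type*) [Field F] [Fintype F] (n : ℕ) (S : Set (Mat F n)) (β : F) : ℕ :=
  (Finset.univ.filter fun w => w ∈ S ∧ Matrix.trace w = β).card

/-- Hamming weight of a binary word. -/
def wordWeight {α : Type*} [Fintype α] (u : α → ZMod 2) : ℕ :=
  (Finset.univ.filter fun x => u x = 1).card

/-- The number of codewords of Hamming weight `j` in the binary code `C(S)`
consisting of all `u ∈ F_2^S` with `∑_{w ∈ S} u(w)·Tr(w) = 0` in `F`. -/
def weightCount (F : Type*) [Field F] [Fintype F] (n : ℕ) (S : Set (Mat F n)) (j : ℕ) : ℕ :=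
  Nat.card {u : S → ZMod 2 //
    (∑ w : S, if u w = 1 then Matrix.trace (w : Mat F n) else 0) = 0 ∧ wordWeight u = j}

/-- The Kloosterman sum `K(ψ;a)` for a general (complex-valued) additive character. -/
def KlC (F : Type*) [Field F] [Fintype F] (ψ : AddChar F ℂ) (a : F) : ℂ :=
  ∑ α : Fˣ, ψ ((α : F) + a * ((α : F))⁻¹)

/-- The Kloosterman sum `K_{GL(t,q)}(ψ;a)` for the general linear group. -/
def KGL (F : Type*) [Field F] [Fintype F] (ψ : AddChar F ℂ) (t : ℕ) (a : F) : ℂ :=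
  ∑ w : Matrix.GeneralLinearGroup (Fin t) F,
    ψ (Matrix.trace (w : Matrix (Fin t) (Fin t) F) +
       a * Matrix.trace ((↑(w⁻¹) : Matrix (Fin t) (Fin t) F)))

/-- The exponential sum `∑_{w ∈ S} ψ(Tr w)` over a set of matrices. -/
def expSum (F : Type*) [Field F] [Fintype F] (n : ℕ) (S : Set (Mat F n))
    (ψ : AddChar F ℂ) : ℂ :=
  ∑ w ∈ Finset.univ.filter (fun w => w ∈ S), ψ (Matrix.trace w)

/-- The exponential sum `∑_{w ∈ S} λ(a·Tr w)` over a set of matrices. -/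
def expSumQ (F : Type*) [Field F] [Fintype F] (r n : ℕ) (S : Set (Mat F n)) (a : F) : ℚ :=
  ∑ w ∈ Finset.univ.filter (fun w => w ∈ S), lam F r (a * Matrix.trace w)

/-- `tr` as a map to `ZMod 2`. -/
def trZ (F : Type*) [Field F] (r : ℕ) (x : F) : ZMod 2 :=
  if trF F r x = 0 then 0 else 1
section AuxKlm
variable {F : Type*} [Field F] [Fintype F] {r q : ℕ}

lemma char2 (hr : 0 < r) (hq : q = 2 ^ r) (hF : Fintype.card F = q) : ringChar F = 2 := by
  rw [FiniteField.even_card_iff_char_two, hF, hq]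
  exact Nat.pow_mod 2 r 2 ▸ by rcases Nat.exists_eq_add_of_lt hr with ⟨k, rfl⟩; simp

lemma trF_add (h2 : ringChar F = 2) (x y : F) :
    trF F r (x + y) = trF F r x + trF F r y := by
  haveI : CharP F 2 := h2 ▸ ringChar.charP F
  haveI : Fact (Nat.Prime 2) := ⟨Nat.prime_two⟩
  simp only [trF]
  rw [← Finset.sum_add_distrib]
  exact Finset.sum_congr rfl fun i _ => add_pow_char_pow x y 2 i

omit [Fintype F] in
lemma trF_zero : trF F r (0 : F) = 0 := by
  have h : ∀ i : ℕ, (0 : F) ^ 2 ^ i = 0 := fun i => zero_pow (Nat.pow_pos (n := i) two_pos).ne'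
  simp [trF, h]

lemma trF_sq (hr : 0 < r) (hq : q = 2 ^ r) (hF : Fintype.card F = q) (x : F) :
    trF F r x * trF F r x = trF F r x := by
  haveI : CharP F 2 := char2 hr hq hF ▸ ringChar.charP F
  haveI : Fact (Nat.Prime 2) := ⟨Nat.prime_two⟩
  have h : trF F r x * trF F r x - trF F r x = x ^ 2 ^ r - x ^ 2 ^ 0 := by
    have := map_sum (frobenius F 2) (fun i => x ^ 2 ^ i) (Finset.range r)
    have hsq : trF F r x * trF F r x = ∑ i ∈ Finset.range r, x ^ 2 ^ (i+1) := by
      rw [← sq, trF]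
      calc (∑ i ∈ Finset.range r, x ^ 2 ^ i) ^ 2
          = frobenius F 2 (∑ i ∈ Finset.range r, x ^ 2 ^ i) := by rw [frobenius_def]
        _ = ∑ i ∈ Finset.range r, frobenius F 2 (x ^ 2 ^ i) := this
        _ = ∑ i ∈ Finset.range r, x ^ 2 ^ (i+1) := by
            refine Finset.sum_congr rfl fun i _ => ?_
            rw [frobenius_def, ← pow_mul, pow_succ]
    rw [hsq, trF, ← Finset.sum_range_sub (fun i => x ^ 2 ^ i) r]
    rw [Finset.sum_sub_distrib]
  have hx : x ^ 2 ^ r = x := by rw [← hq, ← hF, FiniteField.pow_card]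
  have := h
  rw [hx, pow_zero, pow_one, sub_self] at this
  linear_combination this

lemma trF_cases (hr : 0 < r) (hq : q = 2 ^ r) (hF : Fintype.card F = q) (x : F) :
    trF F r x = 0 ∨ trF F r x = 1 := by
  have := trF_sq hr hq hF x
  rcases mul_eq_zero.mp (by linear_combination this : trF F r x * (trF F r x - 1) = 0) with h | h
  · exact Or.inl h
  · exact Or.inr (by linear_combination h)

lemma lam_add (hr : 0 < r) (hq : q = 2 ^ r) (hF : Fintype.card F = q) (x y : F) :
    lam F r (x + y) = lam F r x * lam F r y := by
  haveI : CharP F 2 := char2 hr hq hF ▸ ringChar.charP F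
  have h2 : (1 : F) + 1 = 0 := by
    have := CharP.cast_eq_zero F 2; push_cast at this; linear_combination this
  have hadd := trF_add (char2 hr hq hF) (r := r) x y
  rcases trF_cases hr hq hF x with hx | hx <;> rcases trF_cases hr hq hF y with hy | hy <;>
    simp [lam, hadd, hx, hy, h2, one_ne_zero]

lemma lam_zero : lam F r (0 : F) = 1 := by simp [lam, trF_zero]

lemma trF_exists_ne (hr : 0 < r) (hq : q = 2 ^ r) (hF : Fintype.card F = q) :
    ∃ x : F, trF F r x ≠ 0 := by
  by_contra h
  push_neg at h
  set p : Polynomial F := ∑ i ∈ Finset.range r, Polynomial.X ^ 2 ^ i with hp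
  have heval : ∀ x : F, p.eval x = trF F r x := by
    intro x; simp [hp, Polynomial.eval_finset_sum, trF]
  have hdeg : p.natDegree < Fintype.card F := by
    calc p.natDegree ≤ 2 ^ (r - 1) := by
          apply Polynomial.natDegree_sum_le_of_forall_le
          intro i hi
          calc (Polynomial.X ^ 2 ^ i : Polynomial F).natDegree ≤ 2 ^ i :=
                le_of_eq (Polynomial.natDegree_X_pow _)
            _ ≤ 2 ^ (r - 1) := Nat.pow_le_pow_right two_pos
                (by have := Finset.mem_range.mp hi; omega)
      _ < 2 ^ r := Nat.pow_lt_pow_right one_lt_two (by omega)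
      _ = Fintype.card F := by rw [hF, hq]
  have hp0 : p = 0 :=
    Polynomial.eq_zero_of_natDegree_lt_card_of_eval_eq_zero p Function.injective_id
      (fun x => by rw [heval]; exact h x) hdeg
  have hc : p.coeff (2 ^ (r - 1)) = 1 := by
    rw [hp, Polynomial.finset_sum_coeff]
    rw [Finset.sum_eq_single (r - 1)]
    · simp [Polynomial.coeff_X_pow]
    · intro i hi hne
      rw [Polynomial.coeff_X_pow]
      have : 2 ^ (r - 1) ≠ 2 ^ i := fun hh =>
        hne (Nat.pow_right_injective (le_refl 2) hh.symm)
      have h2 : ¬ (2 ^ (r-1) = 2 ^ i) := this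
      simp only [h2, if_false]
    · intro hnot
      exact absurd (Finset.mem_range.mpr (by omega)) hnot
  rw [hp0] at hc
  simp at hc

lemma sum_lam (hr : 0 < r) (hq : q = 2 ^ r) (hF : Fintype.card F = q) :
    ∑ x : F, lam F r x = 0 := by
  obtain ⟨c, hc⟩ := trF_exists_ne hr hq hF
  have hlc : lam F r c = -1 := by simp [lam, hc]
  have h1 : ∑ x : F, lam F r (x + c) = ∑ x : F, lam F r x :=
    Fintype.sum_equiv (Equiv.addRight c) _ _ (fun x => rfl)
  have h2 : ∑ x : F, lam F r (x + c) = - ∑ x : F, lam F r x := by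
    simp only [lam_add hr hq hF, hlc, mul_neg_one]
    rw [← Finset.sum_neg_distrib]
  rw [h2] at h1
  linarith

lemma sum_units_lam (hr : 0 < r) (hq : q = 2 ^ r) (hF : Fintype.card F = q) :
    ∑ a : Fˣ, lam F r (a : F) = -1 := by
  have hsub : ∑ a : Fˣ, lam F r (a : F) = ∑ x : {x : F // x ≠ 0}, lam F r (x : F) :=
    Fintype.sum_equiv unitsEquivNeZero _ _ (fun a => rfl)
  have hsplit : ∑ x : F, lam F r x =
      lam F r 0 + ∑ x ∈ Finset.univ.filter (fun x : F => x ≠ 0), lam F r x := by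
    rw [← Finset.sum_filter_add_sum_filter_not Finset.univ (fun x : F => x = 0)]
    congr 1
    rw [Finset.sum_filter]
    simp
  have hst : ∑ x ∈ Finset.univ.filter (fun x : F => x ≠ 0), lam F r x =
      ∑ x : {x : F // x ≠ 0}, lam F r (x : F) := by
    rw [← Finset.sum_subtype (Finset.univ.filter (fun x : F => x ≠ 0))
      (fun x => by simp) (fun x => lam F r x)]
  rw [sum_lam hr hq hF, lam_zero] at hsplit
  rw [hsub, ← hst]
  linarith

lemma sum_units_lam_mul (hr : 0 < r) (hq : q = 2 ^ r) (hF : Fintype.card F = q)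
    (c : F) : ∑ a : Fˣ, lam F r ((a : F) * c) =
      if c = 0 then ((q : ℚ) - 1) else -1 := by
  split_ifs with hc
  · subst hc
    simp only [mul_zero, lam_zero, Finset.sum_const, Finset.card_univ, nsmul_eq_mul, mul_one]
    rw [Fintype.card_units, hF]
    have : 1 ≤ q := by rw [hq]; exact Nat.one_le_two_pow
    push_cast [Nat.cast_sub this]
    ring
  · rw [← sum_units_lam hr hq hF]
    exact Fintype.sum_equiv (Equiv.mulRight (Units.mk0 c hc)) _ _ (fun a => by simp)

lemma lam_sum (hr : 0 < r) (hq : q = 2 ^ r) (hF : Fintype.card F = q)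
    {ι : Type*} (s : Finset ι) (f : ι → F) :
    lam F r (∑ i ∈ s, f i) = ∏ i ∈ s, lam F r (f i) := by
  induction s using Finset.induction_on with
  | empty => simp [lam_zero]
  | insert _ _ hx ih =>
    rw [Finset.sum_insert hx, Finset.prod_insert hx, lam_add hr hq hF, ih]

lemma sum_prod_lam (hr : 0 < r) (hq : q = 2 ^ r) (hF : Fintype.card F = q) (m : ℕ) :
    ∑ α : Fin m → Fˣ, lam F r (∑ i, ((α i : F))) = (-1 : ℚ) ^ m := by
  have h1 : ∀ α : Fin m → Fˣ, lam F r (∑ i, ((α i : F))) = ∏ i, lam F r (α i : F) :=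
    fun α => lam_sum hr hq hF _ _
  simp only [h1]
  have h2 : ∑ x ∈ Fintype.piFinset (fun _ : Fin m => (Finset.univ : Finset Fˣ)),
      ∏ i : Fin m, lam F r ((x i : F)) = ∏ i : Fin m, ∑ a : Fˣ, lam F r (a : F) :=
    (Finset.prod_univ_sum (fun _ : Fin m => (Finset.univ : Finset Fˣ)) (fun _ a => lam F r (a : F))).symm
  rw [show (Finset.univ : Finset (Fin m → Fˣ)) =
      Fintype.piFinset (fun _ : Fin m => (Finset.univ : Finset Fˣ)) by
    simp [Fintype.piFinset_univ]]
  rw [h2]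
  simp [sum_units_lam hr hq hF]

end AuxKlm

/-- Proposition 8: twisted sums of `m`-dimensional Kloosterman
sums, with the convention `K₀(λ;b) = λ(b)`. -/
theorem twisted_sum_Klm
    (F : Type*) [Field F] [Fintype F] (r q : ℕ) (hr : 0 < r) (hq : q = 2 ^ r)
    (hF : Fintype.card F = q) (m : ℕ) (hm : 1 ≤ m) (β : F) :
    (β ≠ 0 →
      ∑ a : Fˣ, lam F r (-(a : F) * β) * Klm F r m (a : F) =
        (q : ℚ) * Klm F r (m - 1) β⁻¹ + (-1 : ℚ) ^ (m + 1)) ∧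
    (β = 0 →
      ∑ a : Fˣ, lam F r (-(a : F) * β) * Klm F r m (a : F) = (-1 : ℚ) ^ (m + 1)) := by
  obtain ⟨k, rfl⟩ : ∃ k, m = k + 1 := ⟨m - 1, by omega⟩
  set S : F → ℚ := fun β => ∑ α : Fin (k+1) → Fˣ,
    (if (∏ i, ((α i : F))⁻¹) = β then lam F r (∑ i, ((α i : F))) else 0) with hS
  have key : ∀ β : F, ∑ a : Fˣ, lam F r (-(a : F) * β) * Klm F r (k+1) (a : F)
      = (q:ℚ) * S β + (-1:ℚ)^(k+1+1) := by
    intro β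
    have step1 : ∀ a : Fˣ, lam F r (-(a : F) * β) * Klm F r (k+1) (a : F)
        = ∑ α : Fin (k+1) → Fˣ,
          lam F r (∑ i, ((α i : F))) *
            lam F r ((a:F) * ((∏ i, ((α i : F))⁻¹) - β)) := by
      intro a
      rw [Klm, Finset.mul_sum]
      refine Finset.sum_congr rfl fun α _ => ?_
      rw [← lam_add hr hq hF, ← lam_add hr hq hF]
      congr 1
      ring
    calc ∑ a : Fˣ, lam F r (-(a : F) * β) * Klm F r (k+1) (a : F)
        = ∑ a : Fˣ, ∑ α : Fin (k+1) → Fˣ,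
            lam F r (∑ i, ((α i : F))) *
              lam F r ((a:F) * ((∏ i, ((α i : F))⁻¹) - β)) :=
          Finset.sum_congr rfl (fun a _ => step1 a)
      _ = ∑ α : Fin (k+1) → Fˣ, ∑ a : Fˣ,
            lam F r (∑ i, ((α i : F))) *
              lam F r ((a:F) * ((∏ i, ((α i : F))⁻¹) - β)) := Finset.sum_comm
      _ = ∑ α : Fin (k+1) → Fˣ, ((q:ℚ) *
            (if (∏ i, ((α i : F))⁻¹) = β then lam F r (∑ i, ((α i : F))) else 0)
            - lam F r (∑ i, ((α i : F)))) := by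
          refine Finset.sum_congr rfl fun α _ => ?_
          rw [← Finset.mul_sum, sum_units_lam_mul hr hq hF]
          by_cases hcond : (∏ i, ((α i : F))⁻¹) = β
          · have h0 : (∏ i, ((α i : F))⁻¹) - β = 0 := by rw [hcond]; ring
            rw [if_pos h0, if_pos hcond]; ring
          · have h0 : (∏ i, ((α i : F))⁻¹) - β ≠ 0 := sub_ne_zero.mpr hcond
            rw [if_neg h0, if_neg hcond]; ring
      _ = (q:ℚ) * S β - (-1:ℚ)^(k+1) := by
          rw [Finset.sum_sub_distrib, ← Finset.mul_sum, sum_prod_lam hr hq hF]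
      _ = (q:ℚ) * S β + (-1:ℚ)^(k+1+1) := by ring
  constructor
  · intro hβ
    have hSβ : S β = Klm F r k β⁻¹ := by
      have e1 : S β = ∑ p : Fˣ × (Fin k → Fˣ),
          (if ((p.1:F))⁻¹ * ∏ i, ((p.2 i : F))⁻¹ = β
            then lam F r ((p.1:F) + ∑ i, ((p.2 i : F))) else 0) := by
        rw [hS]
        refine (Fintype.sum_equiv (Fin.consEquiv (fun _ : Fin (k+1) => Fˣ)) _ _
          (fun p => ?_)).symm
        simp [Fin.prod_univ_succ, Fin.sum_univ_succ, mul_comm]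
      rw [e1, Fintype.sum_prod_type, Finset.sum_comm, Klm]
      refine Finset.sum_congr rfl fun γ _ => ?_
      set b : Fˣ := Units.mk0 β hβ with hb
      set P : Fˣ := (∏ i, γ i)⁻¹ with hP2
      have hPF : (P : F) = ∏ i, ((γ i : F))⁻¹ := by
        rw [hP2]
        push_cast
        simp
      set u₀ : Fˣ := P * b⁻¹ with hu
      have hcond : ∀ x : Fˣ, ((((x:F))⁻¹ * ∏ i, ((γ i:F))⁻¹ = β) ↔ x = u₀) := by
        intro x
        rw [← hPF]
        have h1 : (((x:F))⁻¹ * (P:F) = β) ↔ ((x⁻¹ * P : Fˣ) : F) = (b : F) := by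
          push_cast [hb]; simp
        rw [h1, ← Units.ext_iff, hu]
        constructor
        · intro h; rw [← h]; group
        · intro h; rw [h]; group
      have e2 : ∀ x : Fˣ, (if ((x:F))⁻¹ * ∏ i, ((γ i:F))⁻¹ = β
            then lam F r ((x:F) + ∑ i, ((γ i : F))) else 0)
          = (if x = u₀ then lam F r ((x:F) + ∑ i, ((γ i : F))) else 0) := by
        intro x
        rw [if_congr (hcond x) rfl rfl]
      simp only [e2]
      rw [Finset.sum_ite_eq' Finset.univ u₀ (fun x => lam F r ((x:F) + ∑ i, ((γ i : F))))]
      rw [if_pos (Finset.mem_univ _)]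
      congr 1
      have hu0 : ((u₀ : Fˣ) : F) = (∏ i, ((γ i : F))⁻¹) * β⁻¹ := by
        rw [hu, Units.val_mul, hPF, hb]
        simp [Units.val_inv_eq_inv_val]
      rw [hu0]
      ring
    rw [key, hSβ]
    norm_num
  · intro hβ
    subst hβ
    have hS0 : S 0 = 0 := by
      apply Finset.sum_eq_zero
      intro α _
      have h0 : (∏ i, ((α i : F))⁻¹) ≠ 0 := by
        apply Finset.prod_ne_zero_iff.mpr
        intro i _
        exact inv_ne_zero (Units.ne_zero _)
      rw [if_neg h0]
    rw [key, hS0]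
    ring
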